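/- arXiv:2305.06766 — 2 statements merged into one kernel-verified Lean document; each statement's English description precedes it below -/
import Mathlib

section
/- Let C > 0, χ ∈ (0,2], and let (Z_m) and Z be real random variables on a probability space (Ω, ℙ) such that Z_m converges to Z in probability, the characteristic function of Z_m is t ↦ exp(−C K_m |t|^χ) for nonnegative reals K_m, and K_m → K as m → ∞. Then for all 0 < ε′ < ε, ℙ(|Z| > ε) ≤ 2^{χ+1} C K / ((χ+1) (ε′)^χ). -/
open MeasureTheory ProbabilityTheory Filter Topology

/-- The characteristic function of a real random variable `Z` on `(Ω, P)`:
`φ_Z(t) = E[exp(i t Z)]`. -/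
noncomputable def charFn {Ω : Type*} [MeasurableSpace Ω] (P : Measure Ω) (Z : Ω → ℝ) (t : ℝ) : ℂ :=
  ∫ ω, Complex.exp (t * Z ω * Complex.I) ∂P

private theorem cont_absrpow (χ : ℝ) (hχ : 0 < χ) : Continuous fun t : ℝ => |t| ^ χ :=
  continuous_abs.rpow_const (fun _ => Or.inr hχ.le)

private theorem integral_absrpow (χ u : ℝ) (hχ : 0 < χ) (hu : 0 < u) :
    ∫ t in (-u)..u, |t| ^ χ = 2 * u ^ (χ + 1) / (χ + 1) := by
  have h1 : ∫ t in (0:ℝ)..u, |t| ^ χ = u ^ (χ+1) / (χ+1) := by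
    rw [intervalIntegral.integral_congr (g := fun t => t ^ χ)]
    · rw [integral_rpow (Or.inl (by linarith))]
      simp [Real.zero_rpow (by positivity : χ + 1 ≠ 0)]
    · intro t ht
      rw [Set.uIcc_of_le hu.le] at ht
      simp [abs_of_nonneg ht.1]
  have h2 : ∫ t in (-u)..(0:ℝ), |t| ^ χ = u ^ (χ+1) / (χ+1) := by
    have h := intervalIntegral.integral_comp_neg (a := (0:ℝ)) (b := u) (f := fun t => |t| ^ χ)
    simp only [abs_neg, neg_zero] at h
    rw [← h1, h]
  rw [← intervalIntegral.integral_add_adjacent_intervals (b := (0:ℝ))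
    ((cont_absrpow χ hχ).intervalIntegrable _ _) ((cont_absrpow χ hχ).intervalIntegrable _ _),
    h1, h2]
  ring

private theorem tailBound {Ω : Type*} [MeasurableSpace Ω] (P : Measure Ω) [IsProbabilityMeasure P]
    (c χ : ℝ) (hc : 0 ≤ c) (hχ : 0 < χ) (X : Ω → ℝ) (hX : Measurable X)
    (hch : ∀ t : ℝ, ∫ ω, Real.cos (t * X ω) ∂P = Real.exp (-(c * |t| ^ χ)))
    (ε' : ℝ) (hε' : 0 < ε') :
    P {ω | ε' < |X ω|} ≤ ENNReal.ofReal (2 ^ (χ + 1) * c / ((χ + 1) * ε' ^ χ)) := by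
  set u : ℝ := 2 / ε' with hu_def
  have hu : 0 < u := by positivity
  set ν : Measure ℝ := volume.restrict (Set.Ioc (-u) u) with hν
  have hνuniv : ν Set.univ = ENNReal.ofReal (2 * u) := by
    rw [hν, Measure.restrict_apply_univ, Real.volume_Ioc]
    congr 1; ring
  have hνfin : IsFiniteMeasure ν := by
    constructor
    rw [hνuniv]; exact ENNReal.ofReal_lt_top
  have hiv : ∀ f : ℝ → ℝ, ∫ t, f t ∂ν = ∫ t in (-u)..u, f t := fun f =>
    (intervalIntegral.integral_of_le (by linarith)).symm
  -- Fubini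
  have hint : Integrable (fun p : Ω × ℝ => Real.cos (p.2 * X p.1)) (P.prod ν) := by
    have hmeas : Measurable (fun p : Ω × ℝ => Real.cos (p.2 * X p.1)) :=
      Real.measurable_cos.comp (measurable_snd.mul (hX.comp measurable_fst))
    refine ⟨hmeas.aestronglyMeasurable, ?_⟩
    refine (hasFiniteIntegral_const (1:ℝ)).mono' ?_
    filter_upwards with p
    simpa using Real.abs_cos_le_one _
  have hswap : ∫ ω, (∫ t, Real.cos (t * X ω) ∂ν) ∂P
      = ∫ t, (∫ ω, Real.cos (t * X ω) ∂P) ∂ν :=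
    integral_integral_swap hint
  set F : Ω → ℝ := fun ω => ∫ t, Real.cos (t * X ω) ∂ν with hF
  have hFint : Integrable F P := hint.integral_prod_left
  have hFbdd : ∀ ω, |F ω| ≤ 2 * u := by
    intro ω
    have := norm_integral_le_of_norm_le_const (μ := ν) (C := 1)
      (f := fun t => Real.cos (t * X ω)) (by filter_upwards with t; simpa using Real.abs_cos_le_one _)
    rw [Real.norm_eq_abs] at this
    calc |F ω| ≤ 1 * (ν Set.univ).toReal := this
    _ = 2 * u := by rw [hνuniv, ENNReal.toReal_ofReal (by linarith)]; ring
  set g : Ω → ℝ := fun ω => 2 * u - F ω with hg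
  have hgint : Integrable g P := (integrable_const (2 * u)).sub hFint
  have hgnn : 0 ≤ᵐ[P] g := by
    filter_upwards with ω
    have h := (abs_le.mp (hFbdd ω)).2
    simp only [hg, Pi.zero_apply]
    linarith
  -- pointwise lower bound on the bad set
  set S : Set Ω := {ω | ε' < |X ω|} with hS
  have hSmeas : MeasurableSet S := measurableSet_lt measurable_const (hX.abs)
  have hlow : ∀ ω ∈ S, u ≤ g ω := by
    intro ω hω
    have hx : ε' < |X ω| := hω
    have hxne : X ω ≠ 0 := by
      intro h; rw [h] at hx; simp at hx; linarith
    have hFx : F ω = (X ω)⁻¹ * (2 * Real.sin (u * X ω)) := by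
      rw [hF]
      simp only
      rw [hiv, intervalIntegral.integral_comp_mul_right Real.cos hxne, integral_cos]
      simp only [Real.sin_neg, smul_eq_mul, neg_mul]
      ring
    have hsin : |Real.sin (u * X ω)| ≤ 1 :=
      abs_le.mpr ⟨Real.neg_one_le_sin _, Real.sin_le_one _⟩
    have habs : |F ω| ≤ 2 / |X ω| := by
      rw [hFx, abs_mul, abs_inv, abs_mul, abs_two, div_eq_inv_mul]
      have h0 : (0:ℝ) < |X ω| := abs_pos.mpr hxne
      exact mul_le_mul_of_nonneg_left (by linarith) (inv_nonneg.mpr h0.le)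
    have h2x : 2 / |X ω| ≤ u := by
      rw [hu_def]
      exact div_le_div_of_nonneg_left (by norm_num) hε' hx.le
    have h2 : F ω ≤ 2 / |X ω| := (le_abs_self _).trans habs
    simp only [hg]
    linarith
  -- Markov
  have hmark : u * (P S).toReal ≤ ∫ ω, g ω ∂P := by
    calc u * (P S).toReal ≤ ∫ ω in S, g ω ∂P :=
          setIntegral_ge_of_const_le_real hSmeas (measure_ne_top _ _) hlow hgint.integrableOn
    _ ≤ ∫ ω, g ω ∂P := setIntegral_le_integral hgint hgnn
  -- compute/bound ∫ g
  have hFint2 : ∫ ω, F ω ∂P = ∫ t, Real.exp (-(c * |t| ^ χ)) ∂ν := by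
    rw [hF, hswap]
    exact integral_congr_ae (Filter.Eventually.of_forall fun t => hch t)
  have hintg : ∫ ω, g ω ∂P = 2 * u - ∫ t, Real.exp (-(c * |t| ^ χ)) ∂ν := by
    rw [hg]
    simp only
    rw [integral_sub (integrable_const _) hFint, MeasureTheory.integral_const, hFint2]
    simp
  have hexp_cont : Continuous fun t : ℝ => Real.exp (-(c * |t| ^ χ)) :=
    Real.continuous_exp.comp ((continuous_const.mul (cont_absrpow χ hχ)).neg)
  have hlin_cont : Continuous fun t : ℝ => 1 - c * |t| ^ χ :=
    continuous_const.sub (continuous_const.mul (cont_absrpow χ hχ))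
  have hmono : ∫ t, (1 - c * |t| ^ χ) ∂ν ≤ ∫ t, Real.exp (-(c * |t| ^ χ)) ∂ν := by
    refine integral_mono (hlin_cont.integrableOn_Ioc) (hexp_cont.integrableOn_Ioc) ?_
    intro t
    have := Real.add_one_le_exp (-(c * |t| ^ χ))
    simp only
    linarith
  have i1 : ∫ _t, (1:ℝ) ∂ν = 2 * u := by
    rw [MeasureTheory.integral_const, measureReal_def, hνuniv, ENNReal.toReal_ofReal (by linarith : (0:ℝ) ≤ 2 * u)]
    simp
  have i2 : ∫ t, c * |t| ^ χ ∂ν = c * (2 * u ^ (χ + 1) / (χ + 1)) := by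
    rw [integral_const_mul, hiv, integral_absrpow χ u hχ hu]
  have hlincomp : ∫ t, (1 - c * |t| ^ χ) ∂ν
      = 2 * u - c * (2 * u ^ (χ + 1) / (χ + 1)) := by
    rw [integral_sub (f := fun _ : ℝ => (1:ℝ)) (g := fun t => c * |t| ^ χ) (continuous_const.integrableOn_Ioc)
      ((continuous_const.mul (cont_absrpow χ hχ)).integrableOn_Ioc), i1, i2]
  have hfinal : u * (P S).toReal ≤ c * (2 * u ^ (χ + 1) / (χ + 1)) := by
    calc u * (P S).toReal ≤ ∫ ω, g ω ∂P := hmark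
    _ = 2 * u - ∫ t, Real.exp (-(c * |t| ^ χ)) ∂ν := hintg
    _ ≤ 2 * u - ∫ t, (1 - c * |t| ^ χ) ∂ν := by linarith
    _ = c * (2 * u ^ (χ + 1) / (χ + 1)) := by rw [hlincomp]; ring
  -- algebra to conclude
  have hkey : u * (2 ^ (χ + 1) * c / ((χ + 1) * ε' ^ χ)) = c * (2 * u ^ (χ + 1) / (χ + 1)) := by
    have e1 : u ^ (χ + 1) = 2 ^ (χ + 1) / ε' ^ (χ + 1) := by
      rw [hu_def]; exact Real.div_rpow (by norm_num) hε'.le _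
    have e2 : ε' ^ (χ + 1) = ε' ^ χ * ε' := Real.rpow_add_one hε'.ne' χ
    rw [hu_def, e1, e2]
    have h1 : ε' ^ χ ≠ 0 := by positivity
    have h2 : χ + 1 ≠ 0 := by linarith
    field_simp
  have hT : (P S).toReal ≤ 2 ^ (χ + 1) * c / ((χ + 1) * ε' ^ χ) := by
    have := hfinal
    rw [← hkey] at this
    exact le_of_mul_le_mul_left this hu
  rw [ENNReal.le_ofReal_iff_toReal_le (measure_ne_top _ _) ?_]
  · exact hT
  · positivity

private theorem charFn_re {Ω : Type*} [MeasurableSpace Ω] (P : Measure Ω) [IsProbabilityMeasure P]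
    (X : Ω → ℝ) (hX : Measurable X) (t : ℝ) :
    ∫ ω, Real.cos (t * X ω) ∂P = (charFn P X t).re := by
  have hInt : Integrable (fun ω => Complex.exp (↑t * ↑(X ω) * Complex.I)) P := by
    have hmeas : Measurable fun ω => Complex.exp (↑t * ↑(X ω) * Complex.I) :=
      Complex.measurable_exp.comp
        (((Complex.measurable_ofReal.comp hX).const_mul (t:ℂ)).mul_const Complex.I)
    refine ⟨hmeas.aestronglyMeasurable, ?_⟩
    refine (hasFiniteIntegral_const (1:ℝ)).mono' ?_
    filter_upwards with ω
    have : (↑t * ↑(X ω) * Complex.I) = ((t * X ω : ℝ) : ℂ) * Complex.I := by push_cast; ring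
    rw [this]
    simp only [Complex.norm_exp_ofReal_mul_I, le_refl]
  have h := integral_re (𝕜 := ℂ) hInt
  rw [RCLike.re_to_complex] at h
  rw [charFn, ← h]
  refine integral_congr_ae (Filter.Eventually.of_forall fun ω => ?_)
  have : (↑t * ↑(X ω) * Complex.I) = ((t * X ω : ℝ) : ℂ) * Complex.I := by push_cast; ring
  simp only [RCLike.re_to_complex, this, Complex.exp_ofReal_mul_I_re]

/-- Paper's Lemma 3.3 (probabilistic content): if `Z_m → Z` in probability, each `Z_m` has
characteristic function `exp(-C K_m |t|^χ)` and `K_m → K`, then for `0 < ε' < ε`,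
`P(|Z| > ε) ≤ 2^{χ+1} C K / ((χ+1) (ε')^χ)`. -/
theorem statement7
    {Ω : Type*} [MeasurableSpace Ω] (P : Measure Ω) [IsProbabilityMeasure P]
    (C χ : ℝ) (hC : 0 < C) (hχ : χ ∈ Set.Ioc (0 : ℝ) 2)
    (Z : Ω → ℝ) (hZ : Measurable Z) (Zs : ℕ → Ω → ℝ) (hZs : ∀ m, Measurable (Zs m))
    (hprob : ∀ ε > (0 : ℝ), Tendsto (fun m => P {ω | ε < |Zs m ω - Z ω|}) atTop (𝓝 0))
    (Ks : ℕ → ℝ) (hKs : ∀ m, 0 ≤ Ks m)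
    (hchar : ∀ m t, charFn P (Zs m) t = (Real.exp (-(C * Ks m * |t| ^ χ)) : ℂ))
    (K : ℝ) (hKlim : Tendsto Ks atTop (𝓝 K)) :
    ∀ ε' ε : ℝ, 0 < ε' → ε' < ε →
      P {ω | ε < |Z ω|} ≤ ENNReal.ofReal (2 ^ (χ + 1) * C * K / ((χ + 1) * ε' ^ χ)) := by
  intro ε' ε hε' hεε
  set D : ℝ := (χ + 1) * ε' ^ χ with hD
  -- per-m tail bound
  have htail : ∀ m, P {ω | ε' < |Zs m ω|}
      ≤ ENNReal.ofReal (2 ^ (χ + 1) * C * Ks m / D) := by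
    intro m
    have hch : ∀ t : ℝ, ∫ ω, Real.cos (t * Zs m ω) ∂P
        = Real.exp (-(C * Ks m * |t| ^ χ)) := by
      intro t
      rw [charFn_re P (Zs m) (hZs m) t, hchar m t, Complex.ofReal_re]
    have := tailBound P (C * Ks m) χ (mul_nonneg hC.le (hKs m)) hχ.1 (Zs m) (hZs m) hch ε' hε'
    simpa only [hD, mul_assoc] using this
  -- decomposition
  have hsub : ∀ m, {ω | ε < |Z ω|}
      ⊆ {ω | ε' < |Zs m ω|} ∪ {ω | ε - ε' < |Zs m ω - Z ω|} := by
    intro m ω hω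
    by_contra h
    simp only [Set.mem_union, Set.mem_setOf_eq, not_or, not_lt] at h
    obtain ⟨h1, h2⟩ := h
    have hZω : ε < |Z ω| := hω
    have habs : |Zs m ω - (Zs m ω - Z ω)| ≤ |Zs m ω| + |Zs m ω - Z ω| := abs_sub _ _
    have heq : Zs m ω - (Zs m ω - Z ω) = Z ω := by ring
    rw [heq] at habs
    linarith
  have h1 : ∀ m, P {ω | ε < |Z ω|}
      ≤ ENNReal.ofReal (2 ^ (χ + 1) * C * Ks m / D)
        + P {ω | ε - ε' < |Zs m ω - Z ω|} := by
    intro m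
    calc P {ω | ε < |Z ω|}
        ≤ P ({ω | ε' < |Zs m ω|} ∪ {ω | ε - ε' < |Zs m ω - Z ω|}) :=
          measure_mono (hsub m)
    _ ≤ P {ω | ε' < |Zs m ω|} + P {ω | ε - ε' < |Zs m ω - Z ω|} := measure_union_le _ _
    _ ≤ _ := add_le_add_left (htail m) _
  -- pass to the limit
  have hlim1 : Tendsto (fun m => ENNReal.ofReal (2 ^ (χ + 1) * C * Ks m / D)) atTop
      (𝓝 (ENNReal.ofReal (2 ^ (χ + 1) * C * K / D))) := by
    refine (ENNReal.continuous_ofReal.tendsto _).comp ?_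
    exact (hKlim.const_mul _).div_const _
  have hlim2 : Tendsto (fun m => P {ω | ε - ε' < |Zs m ω - Z ω|}) atTop (𝓝 0) :=
    hprob (ε - ε') (by linarith)
  have hlim : Tendsto (fun m => ENNReal.ofReal (2 ^ (χ + 1) * C * Ks m / D)
      + P {ω | ε - ε' < |Zs m ω - Z ω|}) atTop
      (𝓝 (ENNReal.ofReal (2 ^ (χ + 1) * C * K / D) + 0)) :=
    hlim1.add hlim2
  rw [add_zero] at hlim
  exact ge_of_tendsto' hlim h1
end

section
/- Let C > 0, χ ∈ (0,2], and let X : ℝ → Ω → ℝ be a stochastic process on a probability space (Ω, ℙ). Let a = t₀ < t₁ < ⋯ < t_n = b be a partition such that the increments X_{t_i} − X_{t_{i−1}}, i = 1,…,n, are (mutually) independent and, for each i, the characteristic function of X_{t_i} − X_{t_{i−1}} is x ↦ exp(−C(t_i − t_{i−1})|x|^χ). Then for any function h : ℝ → ℝ and every ε > 0, ℙ(|Σ_{i=1}^n h(t_{i−1})·(X_{t_i} − X_{t_{i−1}})| > ε) ≤ (2^{χ+1} C / ((χ+1) ε^χ)) · Σ_{i=1}^n |h(t_{i−1})|^χ (t_i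 − t_{i−1}). -/
open MeasureTheory ProbabilityTheory Filter Topology

lemma expI_integrable {Ω : Type*} [MeasurableSpace Ω] (P : Measure Ω) [IsProbabilityMeasure P]
    {Z : Ω → ℝ} (hZ : Measurable Z) (x : ℝ) :
    Integrable (fun ω => Complex.exp (x * Z ω * Complex.I)) P := by
  have hm : Measurable fun ω => Complex.exp (x * Z ω * Complex.I) := by
    apply Complex.measurable_exp.comp
    exact (measurable_const.mul (Complex.measurable_ofReal.comp hZ)).mul measurable_const
  refine (integrable_const (1 : ℝ)).mono' hm.aestronglyMeasurable (ae_of_all _ fun ω => ?_)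
  have : ((x : ℂ) * (Z ω : ℂ) * Complex.I) = ((x * Z ω : ℝ) : ℂ) * Complex.I := by push_cast; ring
  rw [this, Complex.norm_exp_ofReal_mul_I]

lemma ProbabilityTheory.IndepFun.integral_mul_complex {Ω : Type*} [MeasurableSpace Ω] {P : Measure Ω}
    {U V : Ω → ℂ} (h : IndepFun U V P) (hU : Integrable U P) (hV : Integrable V P) :
    ∫ ω, U ω * V ω ∂P = (∫ ω, U ω ∂P) * (∫ ω, V ω ∂P) := by
  have hUV : Integrable (fun ω => U ω * V ω) P := by
    have := h.integrable_mul hU hV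
    simpa [Pi.mul_def] using this
  have hUr : Integrable (fun ω => (U ω).re) P := by simpa using hU.re
  have hUi : Integrable (fun ω => (U ω).im) P := by simpa using hU.im
  have hVr : Integrable (fun ω => (V ω).re) P := by simpa using hV.re
  have hVi : Integrable (fun ω => (V ω).im) P := by simpa using hV.im
  have hrr : ∫ ω, (U ω).re * (V ω).re ∂P = (∫ ω, (U ω).re ∂P) * ∫ ω, (V ω).re ∂P := by
    have := (h.comp Complex.measurable_re Complex.measurable_re).integral_mul_eq_mul_integral hUr.aestronglyMeasurable hVr.aestronglyMeasurable
    simpa [Pi.mul_def] using this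
  have hii : ∫ ω, (U ω).im * (V ω).im ∂P = (∫ ω, (U ω).im ∂P) * ∫ ω, (V ω).im ∂P := by
    have := (h.comp Complex.measurable_im Complex.measurable_im).integral_mul_eq_mul_integral hUi.aestronglyMeasurable hVi.aestronglyMeasurable
    simpa [Pi.mul_def] using this
  have hri : ∫ ω, (U ω).re * (V ω).im ∂P = (∫ ω, (U ω).re ∂P) * ∫ ω, (V ω).im ∂P := by
    have := (h.comp Complex.measurable_re Complex.measurable_im).integral_mul_eq_mul_integral hUr.aestronglyMeasurable hVi.aestronglyMeasurable
    simpa [Pi.mul_def] using this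
  have hir : ∫ ω, (U ω).im * (V ω).re ∂P = (∫ ω, (U ω).im ∂P) * ∫ ω, (V ω).re ∂P := by
    have := (h.comp Complex.measurable_im Complex.measurable_re).integral_mul_eq_mul_integral hUi.aestronglyMeasurable hVr.aestronglyMeasurable
    simpa [Pi.mul_def] using this
  have hIrr : Integrable (fun ω => (U ω).re * (V ω).re) P := by
    have := (h.comp Complex.measurable_re Complex.measurable_re).integrable_mul hUr hVr
    simpa [Pi.mul_def] using this
  have hIii : Integrable (fun ω => (U ω).im * (V ω).im) P := by
    have := (h.comp Complex.measurable_im Complex.measurable_im).integrable_mul hUi hVi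
    simpa [Pi.mul_def] using this
  have hIri : Integrable (fun ω => (U ω).re * (V ω).im) P := by
    have := (h.comp Complex.measurable_re Complex.measurable_im).integrable_mul hUr hVi
    simpa [Pi.mul_def] using this
  have hIir : Integrable (fun ω => (U ω).im * (V ω).re) P := by
    have := (h.comp Complex.measurable_im Complex.measurable_re).integrable_mul hUi hVr
    simpa [Pi.mul_def] using this
  have hre : (∫ ω, U ω * V ω ∂P).re = ∫ ω, (U ω * V ω).re ∂P := by
    have := integral_re (𝕜 := ℂ) hUV
    simpa using this.symm
  have him : (∫ ω, U ω * V ω ∂P).im = ∫ ω, (U ω * V ω).im ∂P := by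
    have := integral_im (𝕜 := ℂ) hUV
    simpa using this.symm
  have hreU : (∫ ω, U ω ∂P).re = ∫ ω, (U ω).re ∂P := by
    have := integral_re (𝕜 := ℂ) hU; simpa using this.symm
  have himU : (∫ ω, U ω ∂P).im = ∫ ω, (U ω).im ∂P := by
    have := integral_im (𝕜 := ℂ) hU; simpa using this.symm
  have hreV : (∫ ω, V ω ∂P).re = ∫ ω, (V ω).re ∂P := by
    have := integral_re (𝕜 := ℂ) hV; simpa using this.symm
  have himV : (∫ ω, V ω ∂P).im = ∫ ω, (V ω).im ∂P := by
    have := integral_im (𝕜 := ℂ) hV; simpa using this.symm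
  apply Complex.ext
  · rw [hre, Complex.mul_re, hreU, hreV, himU, himV]
    simp only [Complex.mul_re]
    rw [integral_sub hIrr hIii, hrr, hii]
  · rw [him, Complex.mul_im, hreU, hreV, himU, himV]
    simp only [Complex.mul_im]
    rw [integral_add hIri hIir, hri, hir]

lemma charFn_smul {Ω : Type*} [MeasurableSpace Ω] (P : Measure Ω) (Z : Ω → ℝ) (c x : ℝ) :
    charFn P (fun ω => c * Z ω) x = charFn P Z (x * c) := by
  unfold charFn
  congr 1
  ext ω
  congr 1
  push_cast
  ring

lemma charFn_sum {Ω : Type*} [MeasurableSpace Ω] (P : Measure Ω) [IsProbabilityMeasure P]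
    {ι : Type*} {Z : ι → Ω → ℝ} (hmeas : ∀ i, Measurable (Z i))
    (hind : iIndepFun Z P)
    (s : Finset ι) (x : ℝ) :
    charFn P (fun ω => ∑ i ∈ s, Z i ω) x = ∏ i ∈ s, charFn P (Z i) x := by
  classical
  induction s using Finset.induction_on with
  | empty => simp [charFn]
  | @insert j s hj ih =>
    have hSmeas : Measurable (fun ω => ∑ i ∈ s, Z i ω) := by
      apply Finset.measurable_sum
      intro i _
      exact hmeas i
    have hIndep : IndepFun (Z j) (∑ i ∈ s, Z i) P :=
      (hind.indepFun_finsetSum_of_notMem hmeas hj).symm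
    have hg : Measurable fun r : ℝ => Complex.exp (x * r * Complex.I) := by
      apply Complex.measurable_exp.comp
      exact (measurable_const.mul Complex.measurable_ofReal).mul measurable_const
    have hIndep2 : IndepFun (fun ω => Complex.exp (x * Z j ω * Complex.I))
        (fun ω => Complex.exp (x * (∑ i ∈ s, Z i ω) * Complex.I)) P := by
      have := hIndep.comp hg hg
      simp only [Function.comp_def, Finset.sum_apply] at this
      exact this
    have key : charFn P (fun ω => ∑ i ∈ insert j s, Z i ω) x
        = charFn P (Z j) x * charFn P (fun ω => ∑ i ∈ s, Z i ω) x := by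
      unfold charFn
      rw [← hIndep2.integral_mul_complex (expI_integrable P (hmeas j) x)
        (expI_integrable P hSmeas x)]
      congr 1
      ext ω
      simp only []
      rw [Finset.sum_insert hj, ← Complex.exp_add]
      congr 1
      push_cast
      ring
    rw [key, ih, Finset.prod_insert hj]

lemma tail_bound {Ω : Type*} [MeasurableSpace Ω] (P : Measure Ω) [IsProbabilityMeasure P]
    {S : Ω → ℝ} (hS : Measurable S) {K χ : ℝ} (hK : 0 ≤ K) (hχ1 : 0 < χ)
    (hcos : ∀ x : ℝ, ∫ ω, Real.cos (x * S ω) ∂P = Real.exp (-(K * |x| ^ χ)))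
    {ε : ℝ} (hε : 0 < ε) :
    (P {ω | ε < |S ω|}).toReal ≤ 2 * K * (2 / ε) ^ χ / (χ + 1) := by
  set u : ℝ := 2 / ε with hu
  have hu0 : 0 < u := by positivity
  set A : Set Ω := {ω | ε < |S ω|} with hA
  have hAm : MeasurableSet A := measurableSet_lt measurable_const hS.abs
  set ν : Measure ℝ := volume.restrict (Set.Ioc (-u) u) with hν
  haveI : IsFiniteMeasure ν := by
    constructor
    rw [hν, Measure.restrict_apply_univ]
    exact measure_Ioc_lt_top
  set f : Ω → ℝ → ℝ := fun ω x => 1 - Real.cos (x * S ω) with hf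
  have hFmeas : Measurable (Function.uncurry f) :=
    measurable_const.sub ((measurable_snd.mul (hS.comp measurable_fst)).cos)
  have hFint : Integrable (Function.uncurry f) (P.prod ν) := by
    refine (integrable_const (2 : ℝ)).mono' hFmeas.aestronglyMeasurable (ae_of_all _ ?_)
    rintro ⟨ω, x⟩
    simp only [Function.uncurry_apply_pair, hf, Real.norm_eq_abs]
    rw [abs_le]
    constructor <;>
      nlinarith [Real.cos_le_one (x * S ω), Real.neg_one_le_cos (x * S ω)]
  have hswap : ∫ ω, (∫ x, f ω x ∂ν) ∂P = ∫ x, (∫ ω, f ω x ∂P) ∂ν :=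
    integral_integral_swap hFint
  -- inner integral over Ω
  have hinner : ∀ x : ℝ, ∫ ω, f ω x ∂P = 1 - Real.exp (-(K * |x| ^ χ)) := by
    intro x
    have hci : Integrable (fun ω => Real.cos (x * S ω)) P := by
      refine (integrable_const (1 : ℝ)).mono'
        ((hS.const_mul x).cos).aestronglyMeasurable (ae_of_all _ fun ω => ?_)
      rw [Real.norm_eq_abs, abs_le]
      exact ⟨Real.neg_one_le_cos _, Real.cos_le_one _⟩
    rw [hf]
    simp only []
    rw [integral_sub (integrable_const 1) hci, integral_const, probReal_univ, hcos x]
    simp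
  -- continuity facts
  have hrc : Continuous fun x : ℝ => |x| ^ χ :=
    continuous_abs.rpow_const fun x => Or.inr hχ1.le
  -- upper bound of the x-integral
  have hub : ∫ x, (∫ ω, f ω x ∂P) ∂ν ≤ K * (2 * u ^ (χ + 1) / (χ + 1)) := by
    have hint1 : Integrable (fun x => 1 - Real.exp (-(K * |x| ^ χ))) ν := by
      have : Continuous fun x : ℝ => 1 - Real.exp (-(K * |x| ^ χ)) :=
        continuous_const.sub (Real.continuous_exp.comp ((continuous_const.mul hrc).neg))
      exact this.integrableOn_Ioc
    have hint2 : Integrable (fun x => K * |x| ^ χ) ν :=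
      (continuous_const.mul hrc).integrableOn_Ioc
    have hle : ∫ x, (∫ ω, f ω x ∂P) ∂ν ≤ ∫ x, K * |x| ^ χ ∂ν := by
      simp only [hinner]
      refine integral_mono hint1 hint2 fun x => ?_
      have := Real.add_one_le_exp (-(K * |x| ^ χ))
      simp only []
      linarith
    refine hle.trans ?_
    rw [integral_const_mul]
    have hJ : ∫ x in Set.Ioc (-u) u, |x| ^ χ = 2 * u ^ (χ + 1) / (χ + 1) := by
      rw [← intervalIntegral.integral_of_le (by linarith : -u ≤ u)]
      have h1 : ∫ x in (0 : ℝ)..u, |x| ^ χ = u ^ (χ + 1) / (χ + 1) := by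
        have : ∫ x in (0 : ℝ)..u, |x| ^ χ = ∫ x in (0 : ℝ)..u, x ^ χ := by
          refine intervalIntegral.integral_congr fun y hy => ?_
          rw [Set.uIcc_of_le hu0.le] at hy
          rw [abs_of_nonneg hy.1]
        rw [this, integral_rpow (Or.inl (by linarith))]
        rw [Real.zero_rpow (by positivity : χ + 1 ≠ 0)]
        ring
      have h2 : ∫ x in (-u)..(0 : ℝ), |x| ^ χ = u ^ (χ + 1) / (χ + 1) := by
        have heq : (fun x : ℝ => |x| ^ χ) = fun x : ℝ => |(-x)| ^ χ := by
          funext y; rw [abs_neg]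
        calc ∫ x in (-u)..(0 : ℝ), |x| ^ χ
            = ∫ x in (-u)..(0 : ℝ), |(-x)| ^ χ := by rw [← heq]
          _ = ∫ x in (-(0 : ℝ))..(-(-u)), |x| ^ χ :=
              intervalIntegral.integral_comp_neg (fun x => |x| ^ χ)
          _ = u ^ (χ + 1) / (χ + 1) := by rw [neg_zero, neg_neg]; exact h1
      rw [← intervalIntegral.integral_add_adjacent_intervals
        (hrc.intervalIntegrable (-u) 0) (hrc.intervalIntegrable 0 u), h1, h2]
      ring
    rw [hJ]
  -- lower bound of the Ω-integral
  have hGint : Integrable (fun ω => ∫ x, f ω x ∂ν) P := hFint.integral_prod_left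
  have hlb : u * (P A).toReal ≤ ∫ ω, (∫ x, f ω x ∂ν) ∂P := by
    have hptw : ∀ ω, A.indicator (fun _ => u) ω ≤ ∫ x, f ω x ∂ν := by
      intro ω
      by_cases hω : ω ∈ A
      · rw [Set.indicator_of_mem hω]
        set s : ℝ := S ω with hs
        have hεs : ε < |s| := hω
        have hs0 : (0 : ℝ) < |s| := hε.trans hεs
        have hsne : s ≠ 0 := by
          intro h0; rw [h0] at hs0; simp at hs0
        have hci : IntervalIntegrable (fun x => Real.cos (x * s)) volume (-u) u :=
          (Real.continuous_cos.comp (continuous_id.mul continuous_const)).intervalIntegrable _ _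
        have hGω : ∫ x, f ω x ∂ν = 2 * u - s⁻¹ * (2 * Real.sin (u * s)) := by
          rw [hν, ← intervalIntegral.integral_of_le (by linarith : -u ≤ u)]
          rw [hf]
          simp only []
          rw [intervalIntegral.integral_sub (intervalIntegrable_const) hci,
            intervalIntegral.integral_const]
          rw [intervalIntegral.integral_comp_mul_right Real.cos hsne,
            integral_cos]
          simp only [neg_mul, Real.sin_neg, smul_eq_mul]
          ring
        rw [hGω]
        have hsin : |Real.sin (u * s)| ≤ 1 :=
          abs_le.mpr ⟨Real.neg_one_le_sin _, Real.sin_le_one _⟩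
        have habs : |s⁻¹ * (2 * Real.sin (u * s))| ≤ 2 / |s| := by
          rw [abs_mul, abs_mul, abs_inv]
          rw [div_eq_mul_inv, mul_comm (2 : ℝ)]
          apply mul_le_mul_of_nonneg_left _ (inv_nonneg.2 hs0.le)
          simpa using hsin
        have hlt : 2 / |s| < u := by
          rw [hu]
          exact div_lt_div_of_pos_left (by norm_num) hε hεs
        have := (abs_le.mp (habs.trans hlt.le)).2
        linarith
      · rw [Set.indicator_of_notMem hω]
        refine setIntegral_nonneg measurableSet_Ioc fun x _ => ?_
        have := Real.cos_le_one (x * S ω)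
        simp only [hf]
        linarith
    have hindint : Integrable (A.indicator fun _ : Ω => u) P :=
      (integrable_const u).indicator hAm
    calc u * (P A).toReal = ∫ ω, A.indicator (fun _ => u) ω ∂P := by
          rw [integral_indicator_const u hAm, smul_eq_mul]; rw [mul_comm]; rfl
      _ ≤ ∫ ω, (∫ x, f ω x ∂ν) ∂P := integral_mono hindint hGint hptw
  -- combine
  have hchain : u * (P A).toReal ≤ K * (2 * u ^ (χ + 1) / (χ + 1)) := by
    calc u * (P A).toReal ≤ ∫ ω, (∫ x, f ω x ∂ν) ∂P := hlb
      _ = ∫ x, (∫ ω, f ω x ∂P) ∂ν := hswap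
      _ ≤ K * (2 * u ^ (χ + 1) / (χ + 1)) := hub
  have hpow : u ^ (χ + 1) = u ^ χ * u := by
    rw [Real.rpow_add hu0, Real.rpow_one]
  have hχ10 : (0 : ℝ) < χ + 1 := by linarith
  have : (P A).toReal * u ≤ (2 * K * u ^ χ / (χ + 1)) * u := by
    rw [mul_comm ((P A).toReal)]
    calc u * (P A).toReal ≤ K * (2 * u ^ (χ + 1) / (χ + 1)) := hchain
      _ = (2 * K * u ^ χ / (χ + 1)) * u := by rw [hpow]; field_simp
  exact le_of_mul_le_mul_right this hu0

/-- Discretized form of the paper's tail bound Lemma 3.1: if the increments of `X` over a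
partition `a = t₀ < t₁ < ⋯ < t_n = b` are independent with symmetric `χ`-stable characteristic
functions `exp(-C (t_i - t_{i-1}) |x|^χ)`, then for every `ε > 0`,
`P(|Σ h(t_{i-1})·(X_{t_i} - X_{t_{i-1}})| > ε)
  ≤ (2^{χ+1} C / ((χ+1) ε^χ)) Σ |h(t_{i-1})|^χ (t_i - t_{i-1})`. -/
theorem statement10
    {Ω : Type*} [MeasurableSpace Ω] (P : Measure Ω) [IsProbabilityMeasure P]
    (C χ : ℝ) (hC : 0 < C) (hχ : χ ∈ Set.Ioc (0 : ℝ) 2)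
    (X : ℝ → Ω → ℝ) (hX : ∀ v, Measurable (X v))
    (a b : ℝ) (n : ℕ) (hn : 0 < n) (t : Fin (n + 1) → ℝ)
    (ht : StrictMono t) (ht0 : t 0 = a) (htn : t (Fin.last n) = b)
    (hindep : iIndepFun
      (fun (i : Fin n) ω => X (t i.succ) ω - X (t i.castSucc) ω) P)
    (hchar : ∀ (i : Fin n) (x : ℝ),
      charFn P (fun ω => X (t i.succ) ω - X (t i.castSucc) ω) x
        = (Real.exp (-(C * (t i.succ - t i.castSucc) * |x| ^ χ)) : ℂ))
    (h : ℝ → ℝ) :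
    ∀ ε > (0 : ℝ),
      P {ω | ε < |∑ i : Fin n, h (t i.castSucc) * (X (t i.succ) ω - X (t i.castSucc) ω)|}
        ≤ ENNReal.ofReal (2 ^ (χ + 1) * C / ((χ + 1) * ε ^ χ)
            * ∑ i : Fin n, |h (t i.castSucc)| ^ χ * (t i.succ - t i.castSucc)) := by
  intro ε hε
  obtain ⟨hχ0, hχ2⟩ := hχ
  let c : Fin n → ℝ := fun i => h (t i.castSucc)
  let Y : Fin n → Ω → ℝ := fun i ω => X (t i.succ) ω - X (t i.castSucc) ω
  let Δ : Fin n → ℝ := fun i => t i.succ - t i.castSucc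
  have hYm : ∀ i, Measurable (Y i) := fun i => (hX _).sub (hX _)
  let Z : Fin n → Ω → ℝ := fun i ω => c i * Y i ω
  have hZm : ∀ i, Measurable (Z i) := fun i => (hYm i).const_mul (c i)
  have hZindep : iIndepFun Z P := by
    have := hindep.comp (g := fun i : Fin n => fun y : ℝ => c i * y)
      (fun i => measurable_id.const_mul (c i))
    exact this
  let S : Ω → ℝ := fun ω => ∑ i : Fin n, Z i ω
  have hSm : Measurable S := Finset.measurable_sum _ fun i _ => hZm i
  have hΔ0 : ∀ i, 0 ≤ Δ i := fun i => sub_nonneg.2 (ht (Fin.castSucc_lt_succ (i := i))).le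
  let K : ℝ := C * ∑ i : Fin n, |c i| ^ χ * Δ i
  have hKnn : 0 ≤ K :=
    mul_nonneg hC.le (Finset.sum_nonneg fun i _ =>
      mul_nonneg (Real.rpow_nonneg (abs_nonneg _) _) (hΔ0 i))
  have hcharS : ∀ x : ℝ, charFn P S x = (Real.exp (-(K * |x| ^ χ)) : ℂ) := by
    intro x
    have hstep : charFn P S x = ∏ i : Fin n, charFn P (Z i) x :=
      charFn_sum P hZm hZindep Finset.univ x
    rw [hstep]
    have hterm : ∀ i : Fin n,
        charFn P (Z i) x = (Real.exp (-(C * Δ i * (|c i| ^ χ * |x| ^ χ))) : ℂ) := by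
      intro i
      have : charFn P (Z i) x = charFn P (Y i) (x * c i) := charFn_smul P (Y i) (c i) x
      rw [this, hchar i (x * c i)]
      congr 2
      rw [abs_mul, Real.mul_rpow (abs_nonneg _) (abs_nonneg _)]
      ring
    rw [Finset.prod_congr rfl fun i _ => hterm i, ← Complex.ofReal_prod, ← Real.exp_sum]
    have hsum : ∑ i : Fin n, -(C * Δ i * (|c i| ^ χ * |x| ^ χ)) = -(K * |x| ^ χ) := by
      show _ = -((C * ∑ i : Fin n, |c i| ^ χ * Δ i) * |x| ^ χ)
      rw [Finset.mul_sum, Finset.sum_mul, ← Finset.sum_neg_distrib]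
      exact Finset.sum_congr rfl fun i _ => by ring
    rw [hsum]
  have hcos : ∀ x : ℝ, ∫ ω, Real.cos (x * S ω) ∂P = Real.exp (-(K * |x| ^ χ)) := by
    intro x
    have hint := expI_integrable P hSm x
    have h1 : ∫ ω, (Complex.exp (x * S ω * Complex.I)).re ∂P
        = (∫ ω, Complex.exp (x * S ω * Complex.I) ∂P).re := by
      have := integral_re (𝕜 := ℂ) hint
      simpa using this
    have h2 : ∀ ω, (Complex.exp (x * S ω * Complex.I)).re = Real.cos (x * S ω) := by
      intro ω
      rw [show ((x : ℂ) * (S ω : ℂ) * Complex.I) = ((x * S ω : ℝ) : ℂ) * Complex.I by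
        push_cast; ring]
      exact Complex.exp_ofReal_mul_I_re _
    have h3 : (∫ ω, Complex.exp (x * S ω * Complex.I) ∂P) = charFn P S x := rfl
    calc ∫ ω, Real.cos (x * S ω) ∂P
        = ∫ ω, (Complex.exp (x * S ω * Complex.I)).re ∂P :=
          integral_congr_ae (ae_of_all _ fun ω => (h2 ω).symm)
      _ = (∫ ω, Complex.exp (x * S ω * Complex.I) ∂P).re := h1
      _ = Real.exp (-(K * |x| ^ χ)) := by rw [h3, hcharS x, Complex.ofReal_re]
  have hmain := tail_bound P hSm hKnn hχ0 hcos hε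
  have hconst : 2 * K * (2 / ε) ^ χ / (χ + 1)
      = 2 ^ (χ + 1) * C / ((χ + 1) * ε ^ χ) * ∑ i : Fin n, |c i| ^ χ * Δ i := by
    have hεχ : (0 : ℝ) < ε ^ χ := Real.rpow_pos_of_pos hε χ
    have h2χ : (2 : ℝ) ^ (χ + 1) = 2 ^ χ * 2 := by
      rw [Real.rpow_add (by norm_num : (0 : ℝ) < 2), Real.rpow_one]
    have hχ10 : (0 : ℝ) < χ + 1 := by linarith
    show 2 * (C * ∑ i : Fin n, |c i| ^ χ * Δ i) * (2 / ε) ^ χ / (χ + 1) = _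
    rw [Real.div_rpow (by norm_num) hε.le, h2χ]
    field_simp
  have hgoal : (P {ω | ε < |S ω|}).toReal
      ≤ 2 ^ (χ + 1) * C / ((χ + 1) * ε ^ χ) * ∑ i : Fin n, |c i| ^ χ * Δ i := by
    rw [← hconst]; exact hmain
  show P {ω | ε < |S ω|} ≤ _
  calc P {ω | ε < |S ω|}
      = ENNReal.ofReal ((P {ω | ε < |S ω|}).toReal) :=
        (ENNReal.ofReal_toReal (measure_ne_top _ _)).symm
    _ ≤ _ := ENNReal.ofReal_le_ofReal hgoal
end
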